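/- Let F be the free loop on one generator y. For every n ≥ 0 and m ≥ 1, the deviation (y^m, y, ..., y)_{1,...,1} of level n does not belong to γ3 F. Consequently, for every k ≥ 1, the k-th commutator-associator subloop F_k is not contained in γ3 F. -/
import Mathlib


/-- A loop: a quasigroup with a two-sided identity. -/
class Loop (α : Type*) extends Mul α, One α where
  ldiv : α → α → α
  rdiv : α → α → α
  one_mul : ∀ a : α, 1 * a = a
  mul_one : ∀ a : α, a * 1 = a
  mul_ldiv : ∀ a b : α, a * ldiv a b = b
  ldiv_mul : ∀ a b : α, ldiv a (a * b) = b
  rdiv_mul : ∀ a b : α, rdiv a b * b = a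
  mul_rdiv : ∀ a b : α, rdiv (a * b) b = a

namespace Loop

variable {α : Type*} [Loop α]

/-- The commutator `[a,b] = (ba)\(ab)`. -/
def comm (a b : α) : α := ldiv (b * a) (a * b)

/-- The associator `(a,b,c) = (a(bc))\((ab)c)`. -/
def assoc (a b c : α) : α := ldiv (a * (b * c)) ((a * b) * c)

/-- The associator deviation indexed by a list of indices `αs = [α_n, ..., α_1]`
(stored with the *last* index first) applied to a list of arguments.
Level `0` (empty index list) is the associator. -/
def dev : List ℕ → List α → α
  | [], [a, b, c] => assoc a b c
  | (k :: rest), args =>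
      let A : α → α := fun x => dev rest (args.take (k - 1) ++ x :: args.drop (k + 1))
      ldiv (A (args.getD (k - 1) 1) * A (args.getD k 1))
        (A (args.getD (k - 1) 1 * args.getD k 1))
  | _, _ => 1

/-- A subset is a subloop if it contains `1` and is closed under
multiplication and both divisions. -/
def IsSubloop (S : Set α) : Prop :=
  (1 : α) ∈ S ∧ ∀ a ∈ S, ∀ b ∈ S, a * b ∈ S ∧ ldiv a b ∈ S ∧ rdiv a b ∈ S

/-- A subloop is normal if `xN = Nx`, `(Nx)y = N(xy)` and `y(xN) = (yx)N`. -/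
def IsNormal (S : Set α) : Prop :=
  IsSubloop S ∧
  (∀ x : α, {z | ∃ n ∈ S, z = x * n} = {z | ∃ n ∈ S, z = n * x}) ∧
  (∀ x y : α, {z | ∃ n ∈ S, z = (n * x) * y} = {z | ∃ n ∈ S, z = n * (x * y)}) ∧
  (∀ x y : α, {z | ∃ n ∈ S, z = y * (x * n)} = {z | ∃ n ∈ S, z = (y * x) * n})

/-- `N/M` is central in `L/M`: all commutators and associators involving an
element of `N` lie in `M`. -/
def CentralMod (N M : Set α) : Prop :=
  ∀ n ∈ N, ∀ x y : α,
    comm n x ∈ M ∧ comm x n ∈ M ∧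
    assoc n x y ∈ M ∧ assoc x n y ∈ M ∧ assoc x y n ∈ M

/-- `[N,L]`: the smallest normal subloop `M` such that `N/M` is central in `L/M`. -/
def bracket (N : Set α) : Set α := ⋂₀ {M | IsNormal M ∧ CentralMod N M}

end Loop

/-- The lower central series of a loop: `γ 1 = L`, `γ (i+1) = [γ i, L]`. -/
def Loop.gamma (α : Type*) [Loop α] : ℕ → Set α
  | 0 => Set.univ
  | 1 => Set.univ
  | (n + 2) => Loop.bracket (Loop.gamma α (n + 1))

namespace Loop

variable {α : Type*} [Loop α]

/-- A family `M i` of normal subloops is admissible for the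
commutator-associator filtration. -/
def Admissible (M : ℕ → Set α) : Prop :=
  (∀ i, IsNormal (M i)) ∧ M 1 = Set.univ ∧
  (∀ i p q, 1 ≤ p → 1 ≤ q → i ≤ p + q →
    ∀ a ∈ M p, ∀ b ∈ M q, comm a b ∈ M i) ∧
  (∀ i p q r, 1 ≤ p → 1 ≤ q → 1 ≤ r → i ≤ p + q + r →
    ∀ a ∈ M p, ∀ b ∈ M q, ∀ c ∈ M r, assoc a b c ∈ M i) ∧
  (∀ (i : ℕ) (idx ps : List ℕ) (xs : List α), idx ≠ [] →
    ps.length = idx.length + 3 → xs.length = idx.length + 3 →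
    (∀ j < idx.length, 1 ≤ idx.getD j 0 ∧ idx.getD j 0 ≤ (idx.length - j) + 2) →
    (∀ j < ps.length, 1 ≤ ps.getD j 0 ∧ xs.getD j 1 ∈ M (ps.getD j 0)) →
    i ≤ ps.sum → dev idx xs ∈ M i)

/-- The commutator-associator filtration: the smallest admissible family. -/
def casub (α : Type*) [Loop α] (i : ℕ) : Set α :=
  ⋂₀ {S | ∃ M : ℕ → Set α, Admissible M ∧ S = M i}

/-- Congruence modulo a (normal) subloop: `x ≡ y mod N` iff `x ∈ yN`. -/
def ModEq (N : Set α) (x y : α) : Prop := ∃ n ∈ N, x = y * n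

/-- Loop homomorphisms: maps preserving multiplication. -/
def IsLoopHom {β : Type*} [Loop β] (φ : α → β) : Prop :=
  ∀ a b : α, φ (a * b) = φ a * φ b

/-- The subloop generated by a subset. -/
def closure (S : Set α) : Set α := ⋂₀ {T | IsSubloop T ∧ S ⊆ T}

/-- Left-normed powers: `ypow y m = ((...(yy)y)...)y`. -/
def ypow (y : α) : ℕ → α
  | 0 => 1
  | (m + 1) => ypow y m * y

end Loop

section Higman

variable {L B : Type*} [Loop L] [AddCommGroup B]

/-- Multiplication in Higman's loop `(L, B)`. -/
def hmul (f : L → L → B) (x y : L × B) : L × B :=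
  (x.1 * y.1, x.2 + y.2 + f x.1 y.1)

/-- Left division in Higman's loop: `(l2,b2)\(l1,b1) = (l2\l1, b1-b2-f(l2, l2\l1))`. -/
def hldiv (f : L → L → B) (x y : L × B) : L × B :=
  (Loop.ldiv x.1 y.1, y.2 - x.2 - f x.1 (Loop.ldiv x.1 y.1))

/-- Right division in Higman's loop: `(l1,b1)/(l2,b2) = (l1/l2, b1-b2-f(l1/l2, l2))`. -/
def hrdiv (f : L → L → B) (x y : L × B) : L × B :=
  (Loop.rdiv x.1 y.1, x.2 - y.2 - f (Loop.rdiv x.1 y.1) y.1)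

/-- The commutator in Higman's loop. -/
def hcomm (f : L → L → B) (x y : L × B) : L × B :=
  hldiv f (hmul f y x) (hmul f x y)

/-- The associator in Higman's loop. -/
def hassoc (f : L → L → B) (x y z : L × B) : L × B :=
  hldiv f (hmul f x (hmul f y z)) (hmul f (hmul f x y) z)

end Higman

universe u
/- ======================= Auxiliary development ======================= -/

namespace CAS

open Loop

section Basic

variable {α : Type*} [Loop α]

theorem lcancel {a b c : α} (h : a * b = a * c) : b = c := by
  have := Loop.ldiv_mul a b
  rw [h, Loop.ldiv_mul] at this
  exact this.symm

theorem rcancel {a b c : α} (h : b * a = c * a) : b = c := by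
  have := Loop.mul_rdiv b a
  rw [h, Loop.mul_rdiv] at this
  exact this.symm

@[simp] theorem ldiv_self (a : α) : Loop.ldiv a a = 1 := by
  have := Loop.ldiv_mul a 1
  rwa [Loop.mul_one] at this

@[simp] theorem rdiv_self (a : α) : Loop.rdiv a a = 1 := by
  have := Loop.mul_rdiv 1 a
  rwa [Loop.one_mul] at this

variable {β : Type*} [Loop β] {φ : α → β} (hφ : Loop.IsLoopHom φ)

include hφ

theorem hom_one : φ 1 = 1 := by
  have h := hφ 1 1
  rw [Loop.mul_one] at h
  have : φ 1 * φ 1 = φ 1 * 1 := by rw [Loop.mul_one]; exact h.symm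
  exact (lcancel this)

theorem hom_ldiv (a b : α) : φ (Loop.ldiv a b) = Loop.ldiv (φ a) (φ b) := by
  apply lcancel (a := φ a)
  rw [← hφ, Loop.mul_ldiv, Loop.mul_ldiv]

theorem hom_rdiv (a b : α) : φ (Loop.rdiv a b) = Loop.rdiv (φ a) (φ b) := by
  apply rcancel (a := φ b)
  rw [← hφ, Loop.rdiv_mul, Loop.rdiv_mul]

theorem hom_comm (a b : α) : φ (Loop.comm a b) = Loop.comm (φ a) (φ b) := by
  rw [Loop.comm, Loop.comm, hom_ldiv hφ, hφ, hφ]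

theorem hom_assoc (a b c : α) :
    φ (Loop.assoc a b c) = Loop.assoc (φ a) (φ b) (φ c) := by
  rw [Loop.assoc, Loop.assoc, hom_ldiv hφ, hφ, hφ, hφ, hφ]

theorem hom_ypow (a : α) (m : ℕ) : φ (Loop.ypow a m) = Loop.ypow (φ a) m := by
  induction m with
  | zero => exact hom_one hφ
  | succ k ih => rw [Loop.ypow, Loop.ypow, hφ, ih]

theorem map_getD (l : List α) (j : ℕ) :
    (l.map φ).getD j 1 = φ (l.getD j 1) := by
  induction l generalizing j with
  | nil => simp [List.getD, hom_one hφ]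
  | cons a t ih =>
    cases j with
    | zero => simp [List.getD]
    | succ j' => simpa [List.getD] using ih j'

theorem hom_dev (idx : List ℕ) (args : List α) :
    φ (Loop.dev idx args) = Loop.dev idx (args.map φ) := by
  induction idx generalizing args with
  | nil =>
    match args with
    | [a, b, c] => simp [Loop.dev, hom_assoc hφ]
    | [] => simp [Loop.dev, hom_one hφ]
    | [a] => simp [Loop.dev, hom_one hφ]
    | [a, b] => simp [Loop.dev, hom_one hφ]
    | a :: b :: c :: d :: t => simp [Loop.dev, hom_one hφ]
  | cons k rest ih =>
    have hm : ∀ a b : α, φ (a * b) = φ a * φ b := hφ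
    simp only [Loop.dev]
    rw [hom_ldiv hφ, hm]
    simp only [ih, hm, List.map_append, List.map_cons, List.map_take, List.map_drop,
      map_getD hφ, hφ]

end Basic

end CAS
namespace CAS

open Loop

section Ker

variable {α β : Type*} [Loop α] [Loop β] {φ : α → β} (hφ : Loop.IsLoopHom φ)

/-- The kernel of a loop homomorphism. -/
def ker (φ : α → β) : Set α := {x | φ x = 1}

include hφ

theorem ker_subloop : Loop.IsSubloop (ker φ) := by
  refine ⟨hom_one hφ, ?_⟩
  intro a ha b hb
  have ha : φ a = 1 := ha
  have hb : φ b = 1 := hb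
  refine ⟨?_, ?_, ?_⟩
  · show φ (a * b) = 1
    rw [hφ, ha, hb, Loop.mul_one]
  · show φ (Loop.ldiv a b) = 1
    rw [hom_ldiv hφ, ha, hb, ldiv_self]
  · show φ (Loop.rdiv a b) = 1
    rw [hom_rdiv hφ, ha, hb, rdiv_self]

theorem ker_normal : Loop.IsNormal (ker φ) := by
  refine ⟨ker_subloop hφ, ?_, ?_, ?_⟩
  · intro x
    ext z
    constructor
    · rintro ⟨n, hn, rfl⟩
      refine ⟨Loop.rdiv (x * n) x, ?_, (Loop.rdiv_mul _ _).symm⟩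
      show φ (Loop.rdiv (x * n) x) = 1
      rw [hom_rdiv hφ, hφ, show φ n = 1 from hn, Loop.mul_one, rdiv_self]
    · rintro ⟨n, hn, rfl⟩
      refine ⟨Loop.ldiv x (n * x), ?_, (Loop.mul_ldiv _ _).symm⟩
      show φ (Loop.ldiv x (n * x)) = 1
      rw [hom_ldiv hφ, hφ, show φ n = 1 from hn, Loop.one_mul, ldiv_self]
  · intro x y
    ext z
    constructor
    · rintro ⟨n, hn, rfl⟩
      refine ⟨Loop.rdiv ((n * x) * y) (x * y), ?_, (Loop.rdiv_mul _ _).symm⟩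
      show φ (Loop.rdiv ((n * x) * y) (x * y)) = 1
      rw [hom_rdiv hφ, hφ, hφ, hφ, show φ n = 1 from hn, Loop.one_mul, rdiv_self]
    · rintro ⟨n, hn, rfl⟩
      refine ⟨Loop.rdiv (Loop.rdiv (n * (x * y)) y) x, ?_, ?_⟩
      · show φ (Loop.rdiv (Loop.rdiv (n * (x * y)) y) x) = 1
        rw [hom_rdiv hφ, hom_rdiv hφ, hφ, hφ, show φ n = 1 from hn, Loop.one_mul,
          Loop.mul_rdiv, rdiv_self]
      · rw [Loop.rdiv_mul, Loop.rdiv_mul]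
  · intro x y
    ext z
    constructor
    · rintro ⟨n, hn, rfl⟩
      refine ⟨Loop.ldiv (y * x) (y * (x * n)), ?_, (Loop.mul_ldiv _ _).symm⟩
      show φ (Loop.ldiv (y * x) (y * (x * n))) = 1
      rw [hom_ldiv hφ, hφ, hφ, hφ, show φ n = 1 from hn, Loop.mul_one, ldiv_self]
    · rintro ⟨n, hn, rfl⟩
      refine ⟨Loop.ldiv x (Loop.ldiv y ((y * x) * n)), ?_, ?_⟩
      · show φ (Loop.ldiv x (Loop.ldiv y ((y * x) * n))) = 1
        rw [hom_ldiv hφ, hom_ldiv hφ, hφ, hφ, show φ n = 1 from hn, Loop.mul_one,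
          Loop.ldiv_mul, ldiv_self]
      · rw [Loop.mul_ldiv, Loop.mul_ldiv]

end Ker

end CAS
namespace CAS

/-- The integers as an (associative, commutative) loop, as a fresh type. -/
structure ZL : Type u where
  v : ℤ

instance : Loop ZL.{u} where
  mul x y := ⟨x.v + y.v⟩
  one := ⟨0⟩
  ldiv x y := ⟨y.v - x.v⟩
  rdiv x y := ⟨x.v - y.v⟩
  one_mul a := congrArg ZL.mk (zero_add a.v)
  mul_one a := congrArg ZL.mk (add_zero a.v)
  mul_ldiv a b := congrArg ZL.mk (by ring)
  ldiv_mul a b := congrArg ZL.mk (by show a.v + b.v - a.v = b.v; ring)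
  rdiv_mul a b := congrArg ZL.mk (by show a.v - b.v + b.v = a.v; ring)
  mul_rdiv a b := congrArg ZL.mk (by show a.v + b.v - b.v = a.v; ring)

@[simp] theorem ZL.mul_def (x y : ZL.{u}) : x * y = ⟨x.v + y.v⟩ := rfl
@[simp] theorem ZL.ldiv_def (x y : ZL.{u}) : Loop.ldiv x y = ⟨y.v - x.v⟩ := rfl
@[simp] theorem ZL.one_def : (1 : ZL.{u}) = ⟨0⟩ := rfl

/-- Higman's twisting function. -/
def ff (a b : ℤ) : ℤ := if b = 2 then 1 - 2 ^ a.toNat else 0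

@[simp] theorem ff_zero_right (a : ℤ) : ff a 0 = 0 := by simp [ff]
@[simp] theorem ff_one_right (a : ℤ) : ff a 1 = 0 := by simp [ff]
@[simp] theorem ff_zero_left (b : ℤ) : ff 0 b = 0 := by simp [ff]
@[simp] theorem ff_two (a : ℤ) : ff a 2 = 1 - 2 ^ a.toNat := by simp [ff]

/-- Higman's loop on `ℤ × ℤ` twisted by `ff`, as a fresh structure type. -/
structure HQ : Type u where
  l : ℤ
  b : ℤ

def hqmul (x y : HQ.{u}) : HQ.{u} := ⟨x.l + y.l, x.b + y.b + ff x.l y.l⟩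
def hqone : HQ.{u} := ⟨0, 0⟩
def hqldiv (x y : HQ.{u}) : HQ.{u} := ⟨y.l - x.l, y.b - x.b - ff x.l (y.l - x.l)⟩
def hqrdiv (x y : HQ.{u}) : HQ.{u} := ⟨x.l - y.l, x.b - y.b - ff (x.l - y.l) y.l⟩

theorem hq1 : ∀ a : HQ.{u}, hqmul hqone a = a := by
  intro ⟨l, b⟩; simp [hqmul, hqone]
theorem hq2 : ∀ a : HQ.{u}, hqmul a hqone = a := by
  intro ⟨l, b⟩; simp [hqmul, hqone]
theorem hq3 : ∀ a b : HQ.{u}, hqmul a (hqldiv a b) = b := by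
  intro ⟨l, c⟩ ⟨l', c'⟩; simp [hqmul, hqldiv]; ring
theorem hq4 : ∀ a b : HQ.{u}, hqldiv a (hqmul a b) = b := by
  intro ⟨l, c⟩ ⟨l', c'⟩
  simp only [hqmul, hqldiv, HQ.mk.injEq]
  rw [show l + l' - l = l' from by ring]
  constructor <;> ring
theorem hq5 : ∀ a b : HQ.{u}, hqmul (hqrdiv a b) b = a := by
  intro ⟨l, c⟩ ⟨l', c'⟩; simp [hqmul, hqrdiv]; ring
theorem hq6 : ∀ a b : HQ.{u}, hqrdiv (hqmul a b) b = a := by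
  intro ⟨l, c⟩ ⟨l', c'⟩
  simp only [hqmul, hqrdiv, HQ.mk.injEq]
  rw [show l + l' - l' = l from by ring]
  constructor <;> ring

instance : Loop HQ.{u} where
  mul := hqmul
  one := hqone
  ldiv := hqldiv
  rdiv := hqrdiv
  one_mul := hq1
  mul_one := hq2
  mul_ldiv := hq3
  ldiv_mul := hq4
  rdiv_mul := hq5
  mul_rdiv := hq6

@[simp] theorem HQ.mul_def (x y : HQ.{u}) :
    x * y = ⟨x.l + y.l, x.b + y.b + ff x.l y.l⟩ := rfl
@[simp] theorem HQ.ldiv_def (x y : HQ.{u}) :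
    Loop.ldiv x y = ⟨y.l - x.l, y.b - x.b - ff x.l (y.l - x.l)⟩ := rfl
@[simp] theorem HQ.one_def : (1 : HQ.{u}) = ⟨0, 0⟩ := rfl

theorem HQ.comm_eq (p q : HQ.{u}) :
    Loop.comm p q = ⟨0, ff p.l q.l - ff q.l p.l⟩ := by
  cases p; cases q
  simp only [Loop.comm, HQ.mul_def, HQ.ldiv_def, HQ.mk.injEq]
  constructor
  · ring
  · rw [show ∀ x y : ℤ, x + y - (y + x) = 0 from fun x y => by ring, ff_zero_right]
    ring

theorem HQ.assoc_eq (p q r : HQ.{u}) :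
    Loop.assoc p q r =
      ⟨0, ff p.l q.l + ff (p.l + q.l) r.l - ff q.l r.l - ff p.l (q.l + r.l)⟩ := by
  cases p; cases q; cases r
  simp only [Loop.assoc, HQ.mul_def, HQ.ldiv_def, HQ.mk.injEq]
  constructor
  · ring
  · rw [show ∀ x y z : ℤ, x + y + z - (x + (y + z)) = 0 from fun x y z => by ring,
      ff_zero_right]
    ring

theorem HQ.comm_one_of_left (p q : HQ.{u}) (h : p.l = 0) :
    Loop.comm p q = 1 ∧ Loop.comm q p = 1 := by
  rw [HQ.comm_eq, HQ.comm_eq, h]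
  simp

theorem HQ.assoc_one (p q r : HQ.{u}) (h : p.l = 0 ∨ q.l = 0 ∨ r.l = 0) :
    Loop.assoc p q r = 1 := by
  rw [HQ.assoc_eq]
  rcases h with h | h | h <;> rw [h] <;> simp

end CAS
namespace CAS

open Loop

/-- `ZL` is an abelian group: all commutators are trivial. -/
theorem ZL.comm_eq_one (a b : ZL.{u}) : Loop.comm a b = 1 := by
  cases a; cases b
  simp only [Loop.comm, ZL.mul_def, ZL.ldiv_def, ZL.one_def, ZL.mk.injEq]
  ring

theorem ZL.assoc_eq_one (a b c : ZL.{u}) : Loop.assoc a b c = 1 := by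
  cases a; cases b; cases c
  simp only [Loop.assoc, ZL.mul_def, ZL.ldiv_def, ZL.one_def, ZL.mk.injEq]
  ring

section Dev

variable {α : Type*} [Loop α]

theorem dev_nil (a b c : α) : Loop.dev [] [a, b, c] = Loop.assoc a b c := rfl

theorem dev_cons_one (rest : List ℕ) (a b : α) (t : List α) :
    Loop.dev (1 :: rest) (a :: b :: t) =
      Loop.ldiv (Loop.dev rest (a :: t) * Loop.dev rest (b :: t))
        (Loop.dev rest ((a * b) :: t)) := by
  simp [Loop.dev]

end Dev

/-- The key computation in `HQ`. -/
theorem key (n u : ℕ) (c : ℤ) :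
    Loop.dev (List.replicate n 1)
      (HQ.mk (u : ℤ) c :: List.replicate (n + 2) ⟨1, 0⟩) =
      HQ.mk 0 (2 ^ u - 1) := by
  induction n generalizing u c with
  | zero =>
    rw [List.replicate, List.replicate, List.replicate, List.replicate_zero]
    rw [dev_nil, HQ.assoc_eq]
    simp [ff]
  | succ n ih =>
    rw [List.replicate_succ, List.replicate_succ (n := n + 2)]
    rw [dev_cons_one]
    have hmul : (HQ.mk (u : ℤ) c) * ⟨1, 0⟩ = HQ.mk ((u + 1 : ℕ) : ℤ) c := by
      simp [HQ.mul_def]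
    have h1 := ih 1 0
    rw [show ((1:ℕ):ℤ) = (1:ℤ) from by norm_num] at h1
    rw [hmul, ih, ih, h1]
    simp only [HQ.mul_def, HQ.ldiv_def, HQ.mk.injEq]
    norm_num [ff]
    ring

end CAS
namespace CAS

theorem getD_replicate' {γ : Type*} (a d : γ) {n j : ℕ} (h : j < n) :
    (List.replicate n a).getD j d = a := by
  induction n generalizing j with
  | zero => omega
  | succ n ih =>
    cases j with
    | zero => simp [List.replicate_succ, List.getD]
    | succ j => simpa [List.replicate_succ, List.getD] using ih (by omega)

theorem ypow_l (m : ℕ) : Loop.ypow (HQ.mk.{u} 1 0) m = HQ.mk (m : ℤ) ((Loop.ypow (HQ.mk.{u} 1 0) m).b) := by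
  induction m with
  | zero => rfl
  | succ k ih =>
    conv_lhs => rw [Loop.ypow]
    conv_rhs => rw [Loop.ypow]
    rw [ih]
    simp only [HQ.mul_def, ff_one_right, add_zero]
    norm_num

end CAS
/-- Theorem 1: let `F` be the free loop on one generator `y`.
For every `n ≥ 0` and `m ≥ 1`, the level-`n` deviation
`(y^m, y, ..., y)_{1,...,1}` does not belong to `γ₃ F`; consequently, for
every `k ≥ 1` the `k`-th commutator-associator subloop `F_k` is not contained
in `γ₃ F`. -/
theorem casub_not_in_gamma3 {F : Type u} [Loop F] (y : F)
    (hfree : ∀ (M : Type u) [Loop M] (m : M),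
      ∃! φ : F → M, Loop.IsLoopHom φ ∧ φ y = m) :
    (∀ (n m : ℕ), 1 ≤ m →
      Loop.dev (List.replicate n 1) (Loop.ypow y m :: List.replicate (n + 2) y)
        ∉ Loop.gamma F 3) ∧
    (∀ k : ℕ, 1 ≤ k → ¬ Loop.casub F k ⊆ Loop.gamma F 3) := by
  classical
  obtain ⟨φ, ⟨hhom, hy⟩, -⟩ := hfree (CAS.HQ.{u}) ⟨1, 0⟩
  -- the projection to the `l`-component is a loop hom to `ZL`
  set ψ : F → CAS.ZL.{u} := fun a => CAS.ZL.mk ((φ a).l) with hψdef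
  have hψ : Loop.IsLoopHom ψ := by
    intro a b
    simp only [hψdef, hhom a b, CAS.HQ.mul_def, CAS.ZL.mul_def]
  have hgamma2 : Loop.gamma F 2 =
      ⋂₀ ({M | Loop.IsNormal M ∧ Loop.CentralMod Set.univ M} : Set (Set F)) := rfl
  have hgamma3 : Loop.gamma F 3 =
      ⋂₀ ({M | Loop.IsNormal M ∧ Loop.CentralMod (Loop.gamma F 2) M} : Set (Set F)) := rfl
  have h1 : ∀ (n m : ℕ), 1 ≤ m →
      Loop.dev (List.replicate n 1) (Loop.ypow y m :: List.replicate (n + 2) y)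
        ∉ Loop.gamma F 3 := by
    intro n m hm hmem
    rw [hgamma3] at hmem
    have hker : Loop.dev (List.replicate n 1)
        (Loop.ypow y m :: List.replicate (n + 2) y) ∈ CAS.ker φ := by
      apply hmem
      refine ⟨CAS.ker_normal hhom, ?_⟩
      intro nn hnn x z
      have hnl : (φ nn).l = 0 := by
        have hsub : nn ∈ CAS.ker ψ := by
          rw [hgamma2] at hnn
          apply hnn
          refine ⟨CAS.ker_normal hψ, ?_⟩
          intro p _ x' y'
          refine ⟨?_, ?_, ?_, ?_, ?_⟩ <;>
            first
            | (show ψ (Loop.comm _ _) = 1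
               rw [CAS.hom_comm hψ]; exact CAS.ZL.comm_eq_one _ _)
            | (show ψ (Loop.assoc _ _ _) = 1
               rw [CAS.hom_assoc hψ]; exact CAS.ZL.assoc_eq_one _ _ _)
        have : CAS.ZL.mk ((φ nn).l) = 1 := hsub
        simpa [CAS.ZL.one_def, CAS.ZL.mk.injEq] using this
      refine ⟨?_, ?_, ?_, ?_, ?_⟩
      · show φ (Loop.comm nn x) = 1
        rw [CAS.hom_comm hhom]
        exact (CAS.HQ.comm_one_of_left _ _ hnl).1
      · show φ (Loop.comm x nn) = 1
        rw [CAS.hom_comm hhom]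
        exact (CAS.HQ.comm_one_of_left _ _ hnl).2
      · show φ (Loop.assoc nn x z) = 1
        rw [CAS.hom_assoc hhom]
        exact CAS.HQ.assoc_one _ _ _ (Or.inl hnl)
      · show φ (Loop.assoc x nn z) = 1
        rw [CAS.hom_assoc hhom]
        exact CAS.HQ.assoc_one _ _ _ (Or.inr (Or.inl hnl))
      · show φ (Loop.assoc x z nn) = 1
        rw [CAS.hom_assoc hhom]
        exact CAS.HQ.assoc_one _ _ _ (Or.inr (Or.inr hnl))
    have hval : φ (Loop.dev (List.replicate n 1)
        (Loop.ypow y m :: List.replicate (n + 2) y)) = CAS.HQ.mk 0 (2 ^ m - 1) := by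
      rw [CAS.hom_dev hhom, List.map_cons, List.map_replicate, hy,
        CAS.hom_ypow hhom, hy, CAS.ypow_l, CAS.key]
    have hone : φ (Loop.dev (List.replicate n 1)
        (Loop.ypow y m :: List.replicate (n + 2) y)) = 1 := hker
    rw [hval, CAS.HQ.one_def, CAS.HQ.mk.injEq] at hone
    have h2 : (1 : ℤ) < 2 ^ m := one_lt_pow₀ (by norm_num) (by omega)
    omega
  refine ⟨h1, ?_⟩
  intro k hk hsub
  apply h1 k 1 le_rfl
  apply hsub
  intro S hS
  obtain ⟨M, ⟨hnorm, hM1, hc, ha, hdev⟩, rfl⟩ := hS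
  have := hdev k (List.replicate k 1) (List.replicate (k + 3) 1)
    (Loop.ypow y 1 :: List.replicate (k + 2) y)
    (by
      intro h
      have := congrArg List.length h
      simp at this
      omega)
    (by simp)
    (by simp)
    (by
      intro j hj
      simp only [List.length_replicate] at hj
      rw [CAS.getD_replicate' _ _ hj]
      simp only [List.length_replicate]
      omega)
    (by
      intro j hj
      simp only [List.length_replicate] at hj
      rw [CAS.getD_replicate' _ _ hj, hM1]
      exact ⟨le_rfl, Set.mem_univ _⟩)
    (by
      simp [List.sum_replicate])
  exact this
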